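/- Let B be an unbounded ballean on a set X with radii set P. If the hyperballean B^♭ is uniformly locally finite (for every α ∈ P there exists n ∈ ℕ such that |B^♭(H,α)| ≤ n for every nonempty bounded H ⊆ X), then B coincides with F_X, i.e.: (a) for every α ∈ P there is a finite subset F ⊆ X such that B(x,α) = {x} for every x ∉ F and B(x,α) ⊆ F for every x ∈ F; and (b) for every finite F ⊆ X there is α ∈ P with B_F(x,F) ⊆ B(x,α) for all x ∈ X. -/

import Mathlib

/-- The ball of radius `α` around a subset `A`: `B(A,α) = ⋃_{a ∈ A} B(a,α)`. -/
def setBall {X P : Type*} (B : X → P → Set X) (A : Set X) (α : P) : Set X :=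
  ⋃ a ∈ A, B a α

/-- A subset `Y` is bounded if `Y ⊆ B(x,α)` for some `x` and `α`. -/
def IsBddSet {X P : Type*} (B : X → P → Set X) (Y : Set X) : Prop :=
  ∃ (x : X) (α : P), Y ⊆ B x α

/-- The ball `B^♭(H,α)` of the hyperballean `B^♭`: all nonempty bounded `Z`
with `Z ⊆ B(H,α)` and `H ⊆ B(Z,α)`. -/
def hyperBall {X P : Type*} (B : X → P → Set X) (H : Set X) (α : P) : Set (Set X) :=
  {Z | Z.Nonempty ∧ IsBddSet B Z ∧ Z ⊆ setBall B H α ∧ H ⊆ setBall B Z α}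

section Aux

set_option linter.unusedSectionVars false

variable {X P : Type*} [DecidableEq X] [Nonempty P] {B : X → P → Set X}

lemma mem_setBall' {z : X} {H : Set X} {α : P} :
    z ∈ setBall B H α ↔ ∃ a ∈ H, z ∈ B a α := by
  simp [setBall]

lemma ball_join (hmem : ∀ (x : X) (α : P), x ∈ B x α)
    (hcomp : ∀ α β : P, ∃ γ : P, ∀ x : X, ∀ y ∈ B x α, B y β ⊆ B x γ)
    (α β : P) : ∃ γ : P, ∀ x, B x α ⊆ B x γ ∧ B x β ⊆ B x γ := by
  obtain ⟨γ, hγ⟩ := hcomp α β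
  exact ⟨γ, fun x => ⟨fun z hz => hγ x z hz (hmem z β), fun z hz => hγ x x (hmem x α) hz⟩⟩

lemma list_join (hmem : ∀ (x : X) (α : P), x ∈ B x α)
    (hcomp : ∀ α β : P, ∃ γ : P, ∀ x : X, ∀ y ∈ B x α, B y β ⊆ B x γ) :
    ∀ l : List P, ∃ γ : P, ∀ α ∈ l, ∀ x, B x α ⊆ B x γ := by
  intro l
  induction l with
  | nil => exact ⟨Classical.arbitrary P, by simp⟩
  | cons a l ih =>
    obtain ⟨γ₀, hγ₀⟩ := ih
    obtain ⟨γ, hγ⟩ := ball_join hmem hcomp a γ₀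
    refine ⟨γ, ?_⟩
    rintro β hβ x
    rcases List.mem_cons.mp hβ with rfl | h
    · exact (hγ x).1
    · exact (hγ₀ β h x).trans (hγ x).2

lemma finset_bdd (hmem : ∀ (x : X) (α : P), x ∈ B x α)
    (hcomp : ∀ α β : P, ∃ γ : P, ∀ x : X, ∀ y ∈ B x α, B y β ⊆ B x γ)
    (hconn : ∀ x y : X, ∃ α : P, y ∈ B x α)
    (s : Finset X) (hs : s.Nonempty) :
    ∃ (x : X) (γ : P), (s : Set X) ⊆ B x γ := by
  obtain ⟨x, hx⟩ := hs
  obtain ⟨γ, hγ⟩ := list_join hmem hcomp (s.toList.map fun y => Classical.choose (hconn x y))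
  refine ⟨x, γ, fun y hy => ?_⟩
  exact hγ _ (List.mem_map.mpr ⟨y, by simpa using hy, rfl⟩) x (Classical.choose_spec (hconn x y))

lemma ball_finite (hmem : ∀ (x : X) (α : P), x ∈ B x α)
    (hsymm : ∀ (x y : X) (α : P), y ∈ B x α ↔ x ∈ B y α)
    {α : P}
    (h : ∀ H : Set X, H.Nonempty → IsBddSet B H → (hyperBall B H α).Finite)
    (x : X) : (B x α).Finite := by
  have hfin : (hyperBall B {x} α).Finite :=
    h {x} ⟨x, rfl⟩ ⟨x, α, Set.singleton_subset_iff.mpr (hmem x α)⟩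
  have himg : (fun y => ({y} : Set X)) '' (B x α) ⊆ hyperBall B {x} α := by
    rintro Z ⟨y, hy, rfl⟩
    refine ⟨⟨y, rfl⟩, ⟨x, α, Set.singleton_subset_iff.mpr hy⟩, ?_, ?_⟩
    · exact Set.singleton_subset_iff.mpr (mem_setBall'.mpr ⟨x, rfl, hy⟩)
    · exact Set.singleton_subset_iff.mpr (mem_setBall'.mpr ⟨y, rfl, (hsymm x y α).mp hy⟩)
  exact Set.Finite.of_finite_image (hfin.subset himg)
    (fun a _ b _ hab => Set.singleton_injective hab)

lemma grow (hmem : ∀ (x : X) (α : P), x ∈ B x α)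
    (hsymm : ∀ (x y : X) (α : P), y ∈ B x α ↔ x ∈ B y α)
    {α : P} (hball : ∀ x, (B x α).Finite)
    (hS : {x | B x α ≠ {x}}.Infinite) :
    ∀ m : ℕ, ∃ A C : Finset X, A.Nonempty ∧ Disjoint A C ∧ C.card = m ∧
      ∀ y ∈ C, ∃ x ∈ A, y ∈ B x α := by
  intro m
  induction m with
  | zero =>
    obtain ⟨s, _⟩ := hS.nonempty
    exact ⟨{s}, ∅, ⟨s, by simp⟩, by simp, by simp, by simp⟩
  | succ m ih =>
    obtain ⟨A, C, hA, hdisj, hcard, hpair⟩ := ih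
    have hbad : (⋃ t ∈ ((A ∪ C : Finset X) : Set X), B t α).Finite :=
      Set.Finite.biUnion (Finset.finite_toSet _) (fun t _ => hball t)
    obtain ⟨s, hsS, hsbad⟩ := (hS.diff hbad).nonempty
    have hkey : ∀ t ∈ A ∪ C, s ∉ B t α := by
      intro t ht hst
      exact hsbad (Set.mem_biUnion (by exact_mod_cast ht) hst)
    obtain ⟨y, hy, hys⟩ : ∃ y ∈ B s α, y ≠ s := by
      by_contra hc
      push_neg at hc
      exact hsS (subset_antisymm (fun z hz => hc z hz)
        (Set.singleton_subset_iff.mpr (hmem s α)))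
    have hsAC : s ∉ A ∪ C := fun h => hkey s h (hmem s α)
    have hyAC : y ∉ A ∪ C := fun h => hkey y h ((hsymm s y α).mp hy)
    refine ⟨insert s A, insert y C, ⟨s, Finset.mem_insert_self s _⟩, ?_, ?_, ?_⟩
    · rw [Finset.disjoint_left]
      intro a ha hac
      rcases Finset.mem_insert.mp ha with rfl | ha
      · rcases Finset.mem_insert.mp hac with h | h
        · exact hys h.symm
        · exact hsAC (Finset.mem_union_right _ h)
      · rcases Finset.mem_insert.mp hac with rfl | h
        · exact hyAC (Finset.mem_union_left _ ha)
        · exact Finset.disjoint_left.mp hdisj ha h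
    · rw [Finset.card_insert_of_notMem (fun h => hyAC (Finset.mem_union_right _ h)), hcard]
    · intro z hz
      rcases Finset.mem_insert.mp hz with rfl | hz
      · exact ⟨s, Finset.mem_insert_self s _, hy⟩
      · obtain ⟨x, hx, hzx⟩ := hpair z hz
        exact ⟨x, Finset.mem_insert_of_mem hx, hzx⟩

end Aux

theorem hyperballean_ulf_implies_FX
    {X P : Type*} [DecidableEq X] [Nonempty P] (B : X → P → Set X)
    (hmem : ∀ (x : X) (α : P), x ∈ B x α)
    (hsymm : ∀ (x y : X) (α : P), y ∈ B x α ↔ x ∈ B y α)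
    (hcomp : ∀ α β : P, ∃ γ : P, ∀ x : X, ∀ y ∈ B x α, B y β ⊆ B x γ)
    (hconn : ∀ x y : X, ∃ α : P, y ∈ B x α)
    (hunb : ¬ IsBddSet B Set.univ)
    (hULF : ∀ α : P, ∃ n : ℕ, ∀ H : Set X, H.Nonempty → IsBddSet B H →
      (hyperBall B H α).Finite ∧ (hyperBall B H α).ncard ≤ n) :
    (∀ α : P, ∃ F : Finset X,
      (∀ x : X, x ∉ F → B x α = {x}) ∧ (∀ x ∈ F, B x α ⊆ (F : Set X))) ∧
    (∀ F : Finset X, ∃ α : P, ∀ x : X,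
      (if x ∈ F then (F : Set X) else {x}) ⊆ B x α) := by
  classical
  constructor
  · -- part (a)
    intro α
    obtain ⟨n, hn⟩ := hULF α
    have hball : ∀ x, (B x α).Finite :=
      ball_finite hmem hsymm (fun H h1 h2 => (hn H h1 h2).1)
    have hSfin : {x | B x α ≠ {x}}.Finite := by
      by_contra hS
      obtain ⟨A, C, hA, hdisj, hcard, hpair⟩ := grow hmem hsymm hball hS (n + 1)
      have hHne : ((A ∪ C : Finset X) : Set X).Nonempty := by
        obtain ⟨a, ha⟩ := hA
        exact ⟨a, by exact_mod_cast Finset.mem_union_left _ ha⟩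
      have hHbdd : IsBddSet B ((A ∪ C : Finset X) : Set X) := by
        obtain ⟨x, γ, h⟩ := finset_bdd hmem hcomp hconn (A ∪ C)
          ⟨hHne.choose, by exact_mod_cast hHne.choose_spec⟩
        exact ⟨x, γ, h⟩
      obtain ⟨hfin, hncard⟩ := hn ((A ∪ C : Finset X) : Set X) hHne hHbdd
      set Φ : Finset X → Set X := fun T => ((A ∪ T : Finset X) : Set X) with hΦ
      have hsub : Φ '' ↑C.powerset ⊆ hyperBall B ((A ∪ C : Finset X) : Set X) α := by
        rintro Z ⟨T, hT, rfl⟩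
        have hTC : T ⊆ C := Finset.mem_powerset.mp (by exact_mod_cast hT)
        obtain ⟨a, ha⟩ := hA
        have hATne : (A ∪ T).Nonempty := ⟨a, Finset.mem_union_left _ ha⟩
        obtain ⟨x, γ, hb⟩ := finset_bdd hmem hcomp hconn (A ∪ T) hATne
        refine ⟨⟨a, by exact_mod_cast Finset.mem_union_left _ ha⟩, ⟨x, γ, hb⟩, ?_, ?_⟩
        · intro z hz
          have hz' : z ∈ A ∪ T := by exact_mod_cast hz
          have : z ∈ A ∪ C := by
            rcases Finset.mem_union.mp hz' with h | h
            · exact Finset.mem_union_left _ h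
            · exact Finset.mem_union_right _ (hTC h)
          exact mem_setBall'.mpr ⟨z, by exact_mod_cast this, hmem z α⟩
        · intro h hh
          have hh' : h ∈ A ∪ C := by exact_mod_cast hh
          rcases Finset.mem_union.mp hh' with h1 | h1
          · exact mem_setBall'.mpr ⟨h, by exact_mod_cast Finset.mem_union_left _ h1, hmem h α⟩
          · obtain ⟨x', hx', hhx'⟩ := hpair h h1
            exact mem_setBall'.mpr ⟨x', by exact_mod_cast Finset.mem_union_left _ hx', hhx'⟩
      have hinter : ∀ T : Finset X, T ⊆ C → (A ∪ T) ∩ C = T := by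
        intro T hTC
        ext a
        simp only [Finset.mem_inter, Finset.mem_union]
        constructor
        · rintro ⟨h1 | h1, h2⟩
          · exact absurd h2 (Finset.disjoint_left.mp hdisj h1)
          · exact h1
        · exact fun h => ⟨Or.inr h, hTC h⟩
      have hinj : Set.InjOn Φ ↑C.powerset := by
        intro T₁ h₁ T₂ h₂ heq
        have hT₁ : T₁ ⊆ C := Finset.mem_powerset.mp (by exact_mod_cast h₁)
        have hT₂ : T₂ ⊆ C := Finset.mem_powerset.mp (by exact_mod_cast h₂)
        have : A ∪ T₁ = A ∪ T₂ := Finset.coe_injective heq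
        calc T₁ = (A ∪ T₁) ∩ C := (hinter T₁ hT₁).symm
          _ = (A ∪ T₂) ∩ C := by rw [this]
          _ = T₂ := hinter T₂ hT₂
      have h1 : (Φ '' ↑C.powerset).ncard = 2 ^ (n + 1) := by
        rw [Set.ncard_image_of_injOn hinj, Set.ncard_coe_finset, Finset.card_powerset, hcard]
      have h2 : (Φ '' ↑C.powerset).ncard ≤ n :=
        (Set.ncard_le_ncard hsub hfin).trans hncard
      rw [h1] at h2
      have h3 : n < 2 ^ n := Nat.lt_two_pow_self
      have h4 : (2 : ℕ) ^ n ≤ 2 ^ (n + 1) := Nat.pow_le_pow_right (by norm_num) (by omega)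
      omega
    have hFfin : (⋃ x ∈ {x | B x α ≠ {x}}, B x α).Finite :=
      Set.Finite.biUnion hSfin (fun x _ => hball x)
    refine ⟨hFfin.toFinset, ?_, ?_⟩
    · intro x hx
      rw [Set.Finite.mem_toFinset] at hx
      by_contra hne
      exact hx (Set.mem_biUnion (show x ∈ {x | B x α ≠ {x}} from hne) (hmem x α))
    · intro x hx
      rw [Set.Finite.mem_toFinset] at hx
      by_cases hxS : B x α ≠ {x}
      · intro z hz
        rw [Set.Finite.coe_toFinset]
        exact Set.mem_biUnion hxS hz
      · push_neg at hxS
        rw [hxS]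
        intro z hz; rcases hz with rfl
        rwa [Set.Finite.coe_toFinset]
  · -- part (b)
    intro F
    obtain ⟨γ, hγ⟩ := list_join hmem hcomp
      ((F ×ˢ F).toList.map fun p => Classical.choose (hconn p.1 p.2))
    refine ⟨γ, fun x => ?_⟩
    split_ifs with hx
    · intro y hy
      have hyF : y ∈ F := by exact_mod_cast hy
      have hmemlist : Classical.choose (hconn x y) ∈
          (F ×ˢ F).toList.map fun p => Classical.choose (hconn p.1 p.2) :=
        List.mem_map.mpr ⟨(x, y), by simp [Finset.mem_toList, Finset.mem_product, hx, hyF], rfl⟩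
      exact hγ _ hmemlist x (Classical.choose_spec (hconn x y))
    · exact Set.singleton_subset_iff.mpr (hmem x γ)
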